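/- Assume the noise variables w_1,…,w_T are independent and each takes only finitely many values, and assume each Bellman function 𝒱_t is measurable. Fix (x_0, z_0) ∈ 𝕏_0 × ℝ^m, and for τ = 0,…,T let W_τ denote the infimum, over all finite processes (U_t, V_t)_{t=0}^{τ−1} with σ(U_t) ⊆ ℱ_{0:t}, σ(V_t) ⊆ ℱ_{0:t+1}, V_t integrable with E[V_t | ℱ_{0:t}] = 0, and with induced states X_0 = x_0, Z_0 = z_0, X_{t+1} = f_t(X_t, U_t, w_{t+1}), Z_{t+1} = Z_t + V_t, of E[Σ_{t=0}^{τ−1} L_t(X_t, U_t, w_{t+1}) + 𝒱_τ(X_τ, Z_τ)]. Then W_{τ+1} = W_τ for every τ = 0,…,T−1; in particular W_T = 𝒱_0(x_0, z_0). -/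

import Mathlib

open MeasureTheory ProbabilityTheory
open scoped ENNReal BigOperators

section Setup

variable {Ω : Type*} [MeasurableSpace Ω] {m : ℕ}
  {𝕏 : ℕ → Type*} [∀ t, MeasurableSpace (𝕏 t)]
  {𝕌 : ℕ → Type*} [∀ t, MeasurableSpace (𝕌 t)]
  {𝕎 : ℕ → Type*} [∀ t, MeasurableSpace (𝕎 t)]

/-- The σ-field `ℱ_{t0:t} = σ(w_{t0+1}, …, w_t)` generated by the noise variables,
with `ℱ_{t0:t0}` the trivial σ-field. -/
def noiseFiltration (w : (t : ℕ) → Ω → 𝕎 t) (t0 t : ℕ) : MeasurableSpace Ω :=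
  ⨆ s ∈ Set.Icc (t0 + 1) t, MeasurableSpace.comap (w s) inferInstance

variable (μ : Measure Ω) (w : (t : ℕ) → Ω → 𝕎 t)
  (f : (t : ℕ) → 𝕏 t → 𝕌 t → 𝕎 (t + 1) → 𝕏 (t + 1))
  (L : (t : ℕ) → 𝕏 t → 𝕌 t → 𝕎 (t + 1) → ℝ≥0∞)

/-- Processes `(U_t, V_t)_{t<τ}` with induced states `(X, Z)` starting from `(x0, z0)`
at time `0`, satisfying the dynamics, nonanticipativity and martingale-type constraints
up to time `τ`. -/
def AdmissibleUpTo (x0 : 𝕏 0) (z0 : Fin m → ℝ) (τ : ℕ)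
    (U : (t : ℕ) → Ω → 𝕌 t) (V : ℕ → Ω → Fin m → ℝ)
    (X : (t : ℕ) → Ω → 𝕏 t) (Z : ℕ → Ω → Fin m → ℝ) : Prop :=
  (∀ ω, X 0 ω = x0) ∧
  (∀ t, t < τ → ∀ ω, X (t + 1) ω = f t (X t ω) (U t ω) (w (t + 1) ω)) ∧
  (∀ t, t < τ →
    MeasurableSpace.comap (U t) inferInstance ≤ noiseFiltration w 0 t) ∧
  (∀ t, t < τ →
    Integrable (V t) μ ∧
    MeasurableSpace.comap (V t) inferInstance ≤ noiseFiltration w 0 (t + 1) ∧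
    μ[V t | noiseFiltration w 0 t] =ᵐ[μ] 0) ∧
  (∀ ω, Z 0 ω = z0) ∧
  (∀ t, t < τ → ∀ ω, Z (t + 1) ω = Z t ω + V t ω)

/-- The value `W_τ` of the truncated problem `𝒫_τ`: the infimum, over admissible
processes up to time `τ`, of the expectation of the cumulated cost up to `τ` plus the
Bellman function `𝒱_τ` evaluated at the state `(X_τ, Z_τ)`. -/
noncomputable def valueUpTo (𝒱 : (t : ℕ) → 𝕏 t → (Fin m → ℝ) → ℝ≥0∞)
    (x0 : 𝕏 0) (z0 : Fin m → ℝ) (τ : ℕ) : ℝ≥0∞ :=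
  ⨅ (U : (t : ℕ) → Ω → 𝕌 t) (V : ℕ → Ω → Fin m → ℝ)
    (X : (t : ℕ) → Ω → 𝕏 t) (Z : ℕ → Ω → Fin m → ℝ)
    (_ : AdmissibleUpTo μ w f x0 z0 τ U V X Z),
    ∫⁻ ω, (∑ t ∈ Finset.range τ, L t (X t ω) (U t ω) (w (t + 1) ω))
      + 𝒱 τ (X τ ω) (Z τ ω) ∂μ

end Setup

namespace BellmanAux

variable {Ω : Type*}

/-- Sets that do not separate `ω` from `ω'` form a σ-algebra. -/
def sepSigma (ω ω' : Ω) : MeasurableSpace Ω where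
  MeasurableSet' S := ω ∈ S ↔ ω' ∈ S
  measurableSet_empty := Iff.rfl
  measurableSet_compl S h := by simp only [Set.mem_compl_iff]; exact not_iff_not.2 h
  measurableSet_iUnion g h := by simp only [Set.mem_iUnion]; exact exists_congr fun i => h i

lemma eq_on_of_sep {G : MeasurableSpace Ω} {A : Set Ω}
    (hA : ∀ S, MeasurableSet[G] S → ∀ ω ∈ A, ∀ ω' ∈ A, (ω ∈ S ↔ ω' ∈ S))
    {E : Type*} [MeasurableSpace E] [MeasurableSingletonClass E]
    {F : Ω → E} (hF : Measurable[G] F) {ω ω' : Ω} (hω : ω ∈ A) (hω' : ω' ∈ A) :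
    F ω = F ω' := by
  have := hA (F ⁻¹' {F ω'}) (hF (measurableSet_singleton _)) ω hω ω' hω'
  simpa using this.2 rfl

lemma sep_sup {G H : MeasurableSpace Ω} {A B : Set Ω}
    (hA : ∀ S, MeasurableSet[G] S → ∀ ω ∈ A, ∀ ω' ∈ A, (ω ∈ S ↔ ω' ∈ S))
    (hB : ∀ S, MeasurableSet[H] S → ∀ ω ∈ B, ∀ ω' ∈ B, (ω ∈ S ↔ ω' ∈ S)) :
    ∀ S, MeasurableSet[G ⊔ H] S → ∀ ω ∈ A ∩ B, ∀ ω' ∈ A ∩ B, (ω ∈ S ↔ ω' ∈ S) := by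
  intro S hS ω hω ω' hω'
  have h1 : G ≤ sepSigma ω ω' := fun S hS => hA S hS ω hω.1 ω' hω'.1
  have h2 : H ≤ sepSigma ω ω' := fun S hS => hB S hS ω hω.2 ω' hω'.2
  exact sup_le h1 h2 S hS

/-- A finite measurable partition of `Ω` into "atoms" of `comap ξ`, for `ξ` of finite
range. -/
lemma exists_partition {E : Type*} [MeasurableSpace E] (ξ : Ω → E)
    (hfin : (Set.range ξ).Finite) :
    ∃ Part : Finset (Set Ω),
      (∀ A ∈ Part, MeasurableSet[MeasurableSpace.comap ξ inferInstance] A) ∧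
      (∀ ω : Ω, ∃ A ∈ Part, ω ∈ A) ∧
      (∀ A ∈ Part, ∀ B ∈ Part, ∀ ω, ω ∈ A → ω ∈ B → A = B) ∧
      (∀ A ∈ Part, ∀ S, MeasurableSet[MeasurableSpace.comap ξ inferInstance] S →
        ∀ ω ∈ A, ∀ ω' ∈ A, (ω ∈ S ↔ ω' ∈ S)) := by
  classical
  set r : E → E → Prop := fun a b => ∀ D : Set E, MeasurableSet D → (a ∈ D ↔ b ∈ D) with hr
  have hrrefl : ∀ a, r a a := fun a D _ => Iff.rfl
  have hrsymm : ∀ a b, r a b → r b a := fun a b h D hD => (h D hD).symm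
  have hrtrans : ∀ a b c, r a b → r b c → r a c := fun a b c h1 h2 D hD =>
    (h1 D hD).trans (h2 D hD)
  have hsep : ∀ a b : E, ¬ r a b → ∃ D : Set E, MeasurableSet D ∧ a ∈ D ∧ b ∉ D := by
    intro a b hab
    simp only [hr, not_forall] at hab
    obtain ⟨D, hD, hiff⟩ := hab
    by_cases ha : a ∈ D
    · refine ⟨D, hD, ha, fun hb => hiff (iff_of_true ha hb)⟩
    · exact ⟨Dᶜ, hD.compl, ha, fun hb => hiff (iff_of_false ha hb)⟩
  choose Dsep hDmeas hain hbnot using hsep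
  set D' : E → E → Set E := fun a b => if h : r a b then Set.univ else Dsep a b h with hD'
  have hD'meas : ∀ a b, MeasurableSet (D' a b) := by
    intro a b; by_cases h : r a b
    · simp only [hD', dif_pos h]; exact MeasurableSet.univ
    · simp only [hD', dif_neg h]; exact hDmeas a b h
  have hD'a : ∀ a b, a ∈ D' a b := by
    intro a b; by_cases h : r a b
    · simp only [hD', dif_pos h]; exact Set.mem_univ a
    · simp only [hD', dif_neg h]; exact hain a b h
  have hD'b : ∀ a b, ¬ r a b → b ∉ D' a b := by
    intro a b h; simp only [hD', dif_neg h]; exact hbnot a b h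
  set Da : E → Set E := fun a => ⋂ b ∈ hfin.toFinset.filter (fun b => ¬ r a b), D' a b with hDa
  have hDameas : ∀ a, MeasurableSet (Da a) := fun a =>
    MeasurableSet.biInter (Finset.countable_toSet _) fun b _ => hD'meas a b
  have hmem : ∀ (a : E) (ω' : Ω), ξ ω' ∈ Da a ↔ r a (ξ ω') := by
    intro a ω'
    constructor
    · intro h
      by_contra hnr
      have hb : ξ ω' ∈ hfin.toFinset.filter (fun b => ¬ r a b) := by
        simp only [Finset.mem_filter, Set.Finite.mem_toFinset]
        exact ⟨⟨ω', rfl⟩, hnr⟩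
      exact hD'b a (ξ ω') hnr (Set.mem_iInter₂.1 h (ξ ω') hb)
    · intro h
      exact Set.mem_iInter₂.2 fun b hb => (h (D' a b) (hD'meas a b)).1 (hD'a a b)
  refine ⟨hfin.toFinset.image (fun a => ξ ⁻¹' (Da a)), ?_, ?_, ?_, ?_⟩
  · rintro A hA
    simp only [Finset.mem_image] at hA
    obtain ⟨a, _, rfl⟩ := hA
    exact ⟨Da a, hDameas a, rfl⟩
  · intro ω
    refine ⟨ξ ⁻¹' (Da (ξ ω)), Finset.mem_image_of_mem _ (hfin.mem_toFinset.2 ⟨ω, rfl⟩), ?_⟩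
    exact (hmem (ξ ω) ω).2 (hrrefl _)
  · rintro A hA B hB ω hωA hωB
    simp only [Finset.mem_image] at hA hB
    obtain ⟨a, _, rfl⟩ := hA
    obtain ⟨b, _, rfl⟩ := hB
    have h1 : r a (ξ ω) := (hmem a ω).1 hωA
    have h2 : r b (ξ ω) := (hmem b ω).1 hωB
    have hba : r b a := hrtrans _ _ _ h2 (hrsymm _ _ h1)
    ext ω'
    simp only [Set.mem_preimage, hmem]
    exact ⟨fun h => hrtrans _ _ _ hba h, fun h => hrtrans _ _ _ (hrsymm _ _ hba) h⟩
  · rintro A hA S hS ω hω ω' hω'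
    simp only [Finset.mem_image] at hA
    obtain ⟨a, _, rfl⟩ := hA
    obtain ⟨D, hD, rfl⟩ := MeasurableSpace.measurableSet_comap.1 hS
    have h1 : r a (ξ ω) := (hmem a ω).1 hω
    have h2 : r a (ξ ω') := (hmem a ω').1 hω'
    exact hrtrans _ _ _ (hrsymm _ _ h1) h2 D hD

end BellmanAux

namespace BellmanAux

variable {Ω : Type*} {𝕎 : ℕ → Type*} [∀ t, MeasurableSpace (𝕎 t)] (w : (t : ℕ) → Ω → 𝕎 t)

lemma noiseFiltration_le [m0 : MeasurableSpace Ω] (hw : ∀ s, Measurable (w s)) (t : ℕ) :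
    noiseFiltration w 0 t ≤ m0 :=
  iSup₂_le fun s _ => (hw s).comap_le

lemma noiseFiltration_mono {t t' : ℕ} (h : t ≤ t') :
    noiseFiltration w 0 t ≤ noiseFiltration w 0 t' := by
  refine iSup₂_le fun s hs => ?_
  have hs' : s ∈ Set.Icc (0 + 1) t' := ⟨hs.1, hs.2.trans h⟩
  exact le_iSup₂ (f := fun (s : ℕ) (_ : s ∈ Set.Icc (0 + 1) t') =>
    MeasurableSpace.comap (w s) inferInstance) s hs'

lemma noiseFiltration_succ (t : ℕ) :
    noiseFiltration w 0 (t + 1) =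
      noiseFiltration w 0 t ⊔ MeasurableSpace.comap (w (t + 1)) inferInstance := by
  have h : Set.Icc (0 + 1) (t + 1) = Set.Icc (0 + 1) t ∪ {t + 1} := by
    ext s; simp only [Set.mem_Icc, Set.mem_union, Set.mem_singleton_iff]; omega
  rw [noiseFiltration, h, iSup_union, noiseFiltration, iSup_singleton]

lemma noiseFiltration_eq_comap (t : ℕ) :
    noiseFiltration w 0 t =
      MeasurableSpace.comap (fun ω (s : Set.Icc 1 t) => w s ω) inferInstance := by
  have hpi : (inferInstance : MeasurableSpace ((s : Set.Icc 1 t) → 𝕎 s)) =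
      ⨆ s : Set.Icc 1 t, MeasurableSpace.comap (fun g : (s : Set.Icc 1 t) → 𝕎 s => g s)
        inferInstance := rfl
  rw [hpi, MeasurableSpace.comap_iSup]
  simp_rw [MeasurableSpace.comap_comp]
  rw [noiseFiltration, show Set.Icc (0 + 1) t = Set.Icc 1 t from rfl, iSup_subtype]
  rfl

lemma finite_range_joint {T t : ℕ} (ht : t ≤ T)
    (hfin : ∀ s, 1 ≤ s → s ≤ T → (Set.range (w s)).Finite) :
    (Set.range (fun ω (s : Set.Icc 1 t) => w s ω)).Finite := by
  have hsub : Set.range (fun ω (s : Set.Icc 1 t) => w s ω) ⊆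
      Set.pi Set.univ (fun s : Set.Icc 1 t => Set.range (w s)) := by
    rintro g ⟨ω, rfl⟩ s _
    exact ⟨ω, rfl⟩
  haveI : Finite (Set.Icc 1 t) := (Set.finite_Icc 1 t).to_subtype
  exact (Set.Finite.pi fun s : Set.Icc 1 t => hfin s s.2.1 (s.2.2.trans ht)).subset hsub

open ProbabilityTheory in
lemma measure_inter_of_indep [m0 : MeasurableSpace Ω] {μ : MeasureTheory.Measure Ω} {T : ℕ}
    (hw : ∀ s, Measurable (w s))
    (hindep : iIndepFun
      (fun t : Fin T => w (t.1 + 1)) μ)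
    {τ : ℕ} (hτ : τ < T) {A B : Set Ω}
    (hA : MeasurableSet[noiseFiltration w 0 τ] A)
    (hB : MeasurableSet[MeasurableSpace.comap (w (τ + 1)) inferInstance] B) :
    μ (A ∩ B) = μ A * μ B := by
  have hii : iIndep (fun i : Fin T => MeasurableSpace.comap (w (i.1 + 1)) inferInstance) μ :=
    hindep.iIndep
  have h := indep_iSup_of_disjoint (fun i : Fin T => (hw _).comap_le) hii
      (S := {i : Fin T | i.1 < τ}) (T := {i : Fin T | i.1 = τ})
      (Set.disjoint_left.2 fun i hi hi' => by
        simp only [Set.mem_setOf_eq] at hi hi'; omega)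
  have hle1 : noiseFiltration w 0 τ ≤ ⨆ i ∈ {i : Fin T | i.1 < τ},
      MeasurableSpace.comap (w (i.1 + 1)) inferInstance := by
    refine iSup₂_le fun s hs => ?_
    have hs1 : 1 ≤ s := hs.1
    have hs2 : s ≤ τ := hs.2
    obtain ⟨s', rfl⟩ : ∃ s', s = s' + 1 := ⟨s - 1, by omega⟩
    have hmem : (⟨s', by omega⟩ : Fin T) ∈ {i : Fin T | i.1 < τ} := by
      simp only [Set.mem_setOf_eq]; omega
    exact le_iSup₂ (f := fun (i : Fin T) (_ : i ∈ {i : Fin T | i.1 < τ}) =>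
      MeasurableSpace.comap (w (i.1 + 1)) inferInstance) _ hmem
  have hle2 : MeasurableSpace.comap (w (τ + 1)) inferInstance ≤
      ⨆ i ∈ {i : Fin T | i.1 = τ}, MeasurableSpace.comap (w (i.1 + 1)) inferInstance :=
    le_iSup₂ (f := fun (i : Fin T) (_ : i ∈ {i : Fin T | i.1 = τ}) =>
      MeasurableSpace.comap (w (i.1 + 1)) inferInstance) ⟨τ, hτ⟩ rfl
  exact (Indep_iff _ _ _).1 h A B (hle1 A hA) (hle2 B hB)

end BellmanAux

namespace BellmanAux

open MeasureTheory

variable {Ω : Type*}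

/-- A finite measurable partition into atoms of the σ-algebra `G`. -/
structure IsPartition (G : MeasurableSpace Ω) (P : Finset (Set Ω)) : Prop where
  meas : ∀ A ∈ P, MeasurableSet[G] A
  cover : ∀ ω : Ω, ∃ A ∈ P, ω ∈ A
  uniq : ∀ A ∈ P, ∀ B ∈ P, ∀ ω, ω ∈ A → ω ∈ B → A = B
  sep : ∀ A ∈ P, ∀ S, MeasurableSet[G] S → ∀ ω ∈ A, ∀ ω' ∈ A, (ω ∈ S ↔ ω' ∈ S)

lemma exists_isPartition {E : Type*} [MeasurableSpace E] (ξ : Ω → E)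
    (hfin : (Set.range ξ).Finite) {G : MeasurableSpace Ω}
    (hG : G = MeasurableSpace.comap ξ inferInstance) :
    ∃ P : Finset (Set Ω), IsPartition G P := by
  obtain ⟨P, h1, h2, h3, h4⟩ := exists_partition ξ hfin
  subst hG
  exact ⟨P, h1, h2, h3, h4⟩

variable {G H : MeasurableSpace Ω} {P Q : Finset (Set Ω)}

lemma IsPartition.pairwiseDisjoint (hP : IsPartition G P) :
    Set.PairwiseDisjoint (↑P : Set (Set Ω)) id := fun A hA B hB hAB =>
  Set.disjoint_left.2 fun ω hωA hωB => hAB (hP.uniq A hA B hB ω hωA hωB)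

lemma IsPartition.biUnion_eq (hP : IsPartition G P) : ⋃ A ∈ P, A = Set.univ := by
  ext ω
  simp only [Set.mem_iUnion, Set.mem_univ, iff_true, exists_prop]
  exact hP.cover ω

lemma IsPartition.subset_of_mem_sep (hP : IsPartition G P) {S A : Set Ω}
    (hS : MeasurableSet[G] S) (hA : A ∈ P) {ω : Ω} (hω : ω ∈ A) (hωS : ω ∈ S) : A ⊆ S :=
  fun ω' hω' => (hP.sep A hA S hS ω' hω' ω hω).2 hωS

section Meas
variable [m0 : MeasurableSpace Ω] {μ : Measure Ω}

lemma IsPartition.lintegral_eq_sum (hP : IsPartition G P) (hG : G ≤ m0) (F : Ω → ℝ≥0∞) :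
    ∫⁻ ω, F ω ∂μ = ∑ A ∈ P, ∫⁻ ω in A, F ω ∂μ := by
  conv_lhs => rw [← setLIntegral_univ (μ := μ) F, ← hP.biUnion_eq]
  exact lintegral_biUnion_finset hP.pairwiseDisjoint (fun A hA => hG A (hP.meas A hA)) F

lemma IsPartition.lintegral_inter_eq_sum (hQ : IsPartition H Q) (hH : H ≤ m0) {A : Set Ω}
    (hA : MeasurableSet A) (Ψ : Ω → ℝ≥0∞) :
    ∫⁻ ω in A, Ψ ω ∂μ = ∑ B ∈ Q, ∫⁻ ω in A ∩ B, Ψ ω ∂μ := by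
  have hset : A = ⋃ B ∈ Q, A ∩ B := by
    ext ω
    simp only [Set.mem_iUnion, Set.mem_inter_iff]
    constructor
    · intro h
      obtain ⟨B, hB, hωB⟩ := hQ.cover ω
      exact ⟨B, hB, h, hωB⟩
    · rintro ⟨B, _, h, _⟩
      exact h
  conv_lhs => rw [hset]
  exact lintegral_biUnion_finset
    (fun B hB B' hB' hne =>
      ((hQ.pairwiseDisjoint hB hB' hne).mono Set.inter_subset_right Set.inter_subset_right))
    (fun B hB => hA.inter (hH _ (hQ.meas B hB))) Ψ

lemma IsPartition.integral_eq_sum {E : Type*} [NormedAddCommGroup E] [NormedSpace ℝ E]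
    (hP : IsPartition G P) (hG : G ≤ m0) {F : Ω → E} (hF : Integrable F μ) :
    ∫ ω, F ω ∂μ = ∑ A ∈ P, ∫ ω in A, F ω ∂μ := by
  conv_lhs => rw [← setIntegral_univ (f := F) (μ := μ), ← hP.biUnion_eq]
  exact integral_biUnion_finset P (fun A hA => hG A (hP.meas A hA))
    (fun A hA B hB hne => hP.pairwiseDisjoint hA hB hne)
    (fun A hA => hF.integrableOn)

lemma IsPartition.integral_inter_eq_sum {E : Type*} [NormedAddCommGroup E] [NormedSpace ℝ E]
    (hQ : IsPartition H Q) (hH : H ≤ m0) {A : Set Ω} (hA : MeasurableSet A)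
    {F : Ω → E} (hF : Integrable F μ) :
    ∫ ω in A, F ω ∂μ = ∑ B ∈ Q, ∫ ω in A ∩ B, F ω ∂μ := by
  have hset : A = ⋃ B ∈ Q, A ∩ B := by
    ext ω
    simp only [Set.mem_iUnion, Set.mem_inter_iff]
    constructor
    · intro h
      obtain ⟨B, hB, hωB⟩ := hQ.cover ω
      exact ⟨B, hB, h, hωB⟩
    · rintro ⟨B, _, h, _⟩
      exact h
  conv_lhs => rw [hset]
  exact integral_biUnion_finset Q (fun B hB => hA.inter (hH _ (hQ.meas B hB)))
    (fun B hB B' hB' hne =>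
      ((hQ.pairwiseDisjoint hB hB' hne).mono Set.inter_subset_right Set.inter_subset_right))
    (fun B hB => hF.integrableOn)

lemma IsPartition.sum_measure (hP : IsPartition G P) (hG : G ≤ m0)
    [IsProbabilityMeasure μ] : ∑ A ∈ P, μ A = 1 := by
  have h := measure_biUnion_finset (μ := μ) hP.pairwiseDisjoint
    (fun A hA => hG A (hP.meas A hA))
  simp only [id] at h
  rw [hP.biUnion_eq, measure_univ] at h
  exact h.symm

lemma setLIntegral_of_sep (hG : G ≤ m0) {A : Set Ω} (hA : MeasurableSet[G] A)
    (hsep : ∀ S, MeasurableSet[G] S → ∀ ω ∈ A, ∀ ω' ∈ A, (ω ∈ S ↔ ω' ∈ S))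
    {F : Ω → ℝ≥0∞} (hF : Measurable[G] F) {ω₀ : Ω} (hω₀ : ω₀ ∈ A) :
    ∫⁻ ω in A, F ω ∂μ = F ω₀ * μ A := by
  rw [setLIntegral_congr_fun (hG _ hA)
    (fun ω (hω : ω ∈ A) => eq_on_of_sep hsep hF hω hω₀)]
  exact setLIntegral_const _ _

end Meas

end BellmanAux

namespace BellmanAux

open MeasureTheory

variable {Ω : Type*} {G H : MeasurableSpace Ω} {Q : Finset (Set Ω)}
  [m0 : MeasurableSpace Ω] {μ : Measure Ω}

lemma lintegral_restrict_eq_mul (hG : G ≤ m0) (hH : H ≤ m0)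
    (hQ : IsPartition H Q)
    {A : Set Ω} (hAmeas : MeasurableSet[G] A)
    (hprod : ∀ B ∈ Q, μ (A ∩ B) = μ A * μ B)
    {Φ Ψ : Ω → ℝ≥0∞} (hΨ : Measurable[H] Ψ) (hagree : ∀ ω ∈ A, Φ ω = Ψ ω) :
    ∫⁻ ω in A, Φ ω ∂μ = μ A * ∫⁻ ω, Ψ ω ∂μ := by
  have h1 : ∫⁻ ω in A, Φ ω ∂μ = ∫⁻ ω in A, Ψ ω ∂μ :=
    setLIntegral_congr_fun (hG _ hAmeas) (fun ω hω => hagree ω hω)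
  rw [h1, hQ.lintegral_inter_eq_sum hH (hG _ hAmeas) Ψ, hQ.lintegral_eq_sum hH Ψ,
    Finset.mul_sum]
  refine Finset.sum_congr rfl fun B hB => ?_
  by_cases hAB : μ (A ∩ B) = 0
  · rw [Measure.restrict_eq_zero.2 hAB, lintegral_zero_measure]
    rcases mul_eq_zero.1 ((hprod B hB) ▸ hAB) with h | h
    · rw [h, zero_mul]
    · rw [Measure.restrict_eq_zero.2 h, lintegral_zero_measure, mul_zero]
  · obtain ⟨ω₀, hω₀⟩ : (A ∩ B).Nonempty :=
      Set.nonempty_iff_ne_empty.2 fun h => hAB (by rw [h]; exact measure_empty)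
    have hconst : ∀ ω ∈ A ∩ B, Ψ ω = Ψ ω₀ := fun ω hω =>
      eq_on_of_sep (hQ.sep B hB) hΨ hω.2 hω₀.2
    rw [setLIntegral_congr_fun ((hG _ hAmeas).inter (hH _ (hQ.meas B hB)))
        hconst, setLIntegral_const,
      setLIntegral_of_sep hH (hQ.meas B hB) (hQ.sep B hB) hΨ hω₀.2,
      hprod B hB]
    ring

lemma integral_restrict_eq_smul {E : Type*} [NormedAddCommGroup E] [NormedSpace ℝ E]
    [MeasurableSpace E] [MeasurableSingletonClass E] [CompleteSpace E]
    (hG : G ≤ m0) (hH : H ≤ m0) (hQ : IsPartition H Q)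
    {A : Set Ω} (hAmeas : MeasurableSet[G] A)
    (hprod : ∀ B ∈ Q, μ (A ∩ B) = μ A * μ B)
    {Φ Ψ : Ω → E} (hΨ : Measurable[H] Ψ) (hagree : ∀ ω ∈ A, Φ ω = Ψ ω)
    (hΦint : Integrable Φ μ) (hΨint : Integrable Ψ μ) :
    ∫ ω in A, Φ ω ∂μ = (μ A).toReal • ∫ ω, Ψ ω ∂μ := by
  have h1 : ∫ ω in A, Φ ω ∂μ = ∫ ω in A, Ψ ω ∂μ :=
    setIntegral_congr_fun (hG _ hAmeas) fun ω hω => hagree ω hω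
  rw [h1, hQ.integral_inter_eq_sum hH (hG _ hAmeas) hΨint,
    hQ.integral_eq_sum hH hΨint, Finset.smul_sum]
  refine Finset.sum_congr rfl fun B hB => ?_
  by_cases hAB : μ (A ∩ B) = 0
  · rw [Measure.restrict_eq_zero.2 hAB, integral_zero_measure]
    rcases mul_eq_zero.1 ((hprod B hB) ▸ hAB) with h | h
    · rw [h, ENNReal.toReal_zero, zero_smul]
    · rw [Measure.restrict_eq_zero.2 h, integral_zero_measure, smul_zero]
  · obtain ⟨ω₀, hω₀⟩ : (A ∩ B).Nonempty :=
      Set.nonempty_iff_ne_empty.2 fun h => hAB (by rw [h]; exact measure_empty)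
    have hconst : Set.EqOn Ψ (fun _ => Ψ ω₀) (A ∩ B) := fun ω hω =>
      eq_on_of_sep (hQ.sep B hB) hΨ hω.2 hω₀.2
    have hconstB : Set.EqOn Ψ (fun _ => Ψ ω₀) B := fun ω hω =>
      eq_on_of_sep (hQ.sep B hB) hΨ hω hω₀.2
    rw [setIntegral_congr_fun ((hG _ hAmeas).inter (hH _ (hQ.meas B hB))) hconst,
      setIntegral_const, setIntegral_congr_fun (hH _ (hQ.meas B hB)) hconstB,
      setIntegral_const, measureReal_def, measureReal_def, hprod B hB, ENNReal.toReal_mul, mul_smul]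

/-- Value of a sum of indicators over a partition at a point. -/
lemma sum_indicator_apply {α : Type*} [AddCommMonoid α] {P : Finset (Set Ω)}
    (huniq : ∀ A ∈ P, ∀ B ∈ P, ∀ ω, ω ∈ A → ω ∈ B → A = B)
    (g : Set Ω → Ω → α) {ω : Ω} {A₀ : Set Ω} (hA₀ : A₀ ∈ P) (hω : ω ∈ A₀) :
    ∑ A ∈ P, A.indicator (g A) ω = g A₀ ω := by
  rw [Finset.sum_eq_single A₀]
  · exact Set.indicator_of_mem hω _
  · intro B hB hne
    refine Set.indicator_of_notMem (fun hωB => hne (huniq B hB A₀ hA₀ ω hωB hω)) _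
  · intro h
    exact absurd hA₀ h

end BellmanAux

namespace BellmanAux

open MeasureTheory ProbabilityTheory

variable {Ω : Type*} [m0 : MeasurableSpace Ω] {m : ℕ}
  {𝕏 : ℕ → Type*} [∀ t, MeasurableSpace (𝕏 t)]
  {𝕌 : ℕ → Type*} [∀ t, MeasurableSpace (𝕌 t)]
  {𝕎 : ℕ → Type*} [∀ t, MeasurableSpace (𝕎 t)]

lemma measurable_XZ
    {μ : Measure Ω} {w : (t : ℕ) → Ω → 𝕎 t}
    {f : (t : ℕ) → 𝕏 t → 𝕌 t → 𝕎 (t + 1) → 𝕏 (t + 1)}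
    (hf : ∀ t, Measurable fun p : 𝕏 t × 𝕌 t × 𝕎 (t + 1) => f t p.1 p.2.1 p.2.2)
    {x0 : 𝕏 0} {z0 : Fin m → ℝ} {τ : ℕ}
    {U : (t : ℕ) → Ω → 𝕌 t} {V : ℕ → Ω → Fin m → ℝ}
    {X : (t : ℕ) → Ω → 𝕏 t} {Z : ℕ → Ω → Fin m → ℝ}
    (hadm : AdmissibleUpTo μ w f x0 z0 τ U V X Z) :
    ∀ t, t ≤ τ → Measurable[noiseFiltration w 0 t] (X t)
      ∧ Measurable[noiseFiltration w 0 t] (Z t) := by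
  obtain ⟨hX0, hXdyn, hU, hV, hZ0, hZdyn⟩ := hadm
  intro t
  induction t with
  | zero =>
    intro _
    constructor
    · have h : X 0 = fun _ => x0 := funext hX0
      rw [h]; exact measurable_const
    · have h : Z 0 = fun _ => z0 := funext hZ0
      rw [h]; exact measurable_const
  | succ t ih =>
    intro ht
    have ht' : t < τ := ht
    have hle : noiseFiltration w 0 t ≤ noiseFiltration w 0 (t + 1) :=
      noiseFiltration_mono w (Nat.le_succ t)
    have hwle : MeasurableSpace.comap (w (t + 1)) inferInstance
        ≤ noiseFiltration w 0 (t + 1) := by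
      rw [noiseFiltration_succ]; exact le_sup_right
    have hXt : Measurable[noiseFiltration w 0 (t + 1)] (X t) :=
      ((ih ht'.le).1).mono hle le_rfl
    have hUt : Measurable[noiseFiltration w 0 (t + 1)] (U t) :=
      (Measurable.of_comap_le (hU t ht')).mono hle le_rfl
    have hwt : Measurable[noiseFiltration w 0 (t + 1)] (w (t + 1)) :=
      Measurable.of_comap_le hwle
    constructor
    · have h : X (t + 1) = fun ω => f t (X t ω) (U t ω) (w (t + 1) ω) := funext (hXdyn t ht')
      rw [h]
      exact (hf t).comp (hXt.prodMk (hUt.prodMk hwt))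
    · have h : Z (t + 1) = fun ω => Z t ω + V t ω := funext (hZdyn t ht')
      rw [h]
      have hVt : Measurable[noiseFiltration w 0 (t + 1)] (V t) :=
        Measurable.of_comap_le (hV t ht').2.1
      exact ((ih ht'.le).2.mono hle le_rfl).add hVt

end BellmanAux

namespace BellmanAux

open MeasureTheory ProbabilityTheory
open scoped ENNReal

variable {Ω : Type*} [m0 : MeasurableSpace Ω] {T m : ℕ}
  {𝕏 : ℕ → Type*} [∀ t, MeasurableSpace (𝕏 t)] [∀ t, Nonempty (𝕏 t)]
  {𝕌 : ℕ → Type*} [∀ t, MeasurableSpace (𝕌 t)] [∀ t, Nonempty (𝕌 t)]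
  {𝕎 : ℕ → Type*} [∀ t, MeasurableSpace (𝕎 t)]

lemma step
    (μ : Measure Ω) [IsProbabilityMeasure μ]
    (w : (t : ℕ) → Ω → 𝕎 t) (hw : ∀ t, Measurable (w t))
    (hindep : iIndepFun
      (fun t : Fin T => w (t.1 + 1)) μ)
    (hfin : ∀ t, 1 ≤ t → t ≤ T → (Set.range (w t)).Finite)
    (f : (t : ℕ) → 𝕏 t → 𝕌 t → 𝕎 (t + 1) → 𝕏 (t + 1))
    (hf : ∀ t, Measurable fun p : 𝕏 t × 𝕌 t × 𝕎 (t + 1) => f t p.1 p.2.1 p.2.2)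
    (L : (t : ℕ) → 𝕏 t → 𝕌 t → 𝕎 (t + 1) → ℝ≥0∞)
    (hL : ∀ t, Measurable fun p : 𝕏 t × 𝕌 t × 𝕎 (t + 1) => L t p.1 p.2.1 p.2.2)
    (𝒱 : (t : ℕ) → 𝕏 t → (Fin m → ℝ) → ℝ≥0∞)
    (h𝒱meas : ∀ t, Measurable fun p : 𝕏 t × (Fin m → ℝ) => 𝒱 t p.1 p.2)
    (h𝒱rec : ∀ t, t < T → ∀ (x : 𝕏 t) (z : Fin m → ℝ),
      𝒱 t x z =
        ⨅ (u : 𝕌 t) (V : Ω → Fin m → ℝ)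
          (_ : MeasurableSpace.comap V inferInstance ≤
                MeasurableSpace.comap (w (t + 1)) inferInstance)
          (_ : Integrable V μ) (_ : ∫ ω, V ω ∂μ = 0),
          ∫⁻ ω, L t x u (w (t + 1) ω) + 𝒱 (t + 1) (f t x u (w (t + 1) ω)) (z + V ω) ∂μ)
    (x0 : 𝕏 0) (z0 : Fin m → ℝ) {τ : ℕ} (hτ : τ < T) :
    valueUpTo μ w f L 𝒱 x0 z0 (τ + 1) = valueUpTo μ w f L 𝒱 x0 z0 τ := by
  classical
  have hNΩ : Nonempty Ω := by
    by_contra h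
    rw [not_nonempty_iff] at h
    have h1 : (Set.univ : Set Ω) = ∅ := Set.univ_eq_empty_iff.2 h
    have := measure_univ (μ := μ)
    rw [h1, measure_empty] at this
    exact zero_ne_one this
  have hGle : noiseFiltration w 0 τ ≤ m0 := noiseFiltration_le w hw τ
  have hHle : MeasurableSpace.comap (w (τ + 1)) inferInstance ≤ m0 := (hw (τ + 1)).comap_le
  have hG'eq : noiseFiltration w 0 (τ + 1) =
      noiseFiltration w 0 τ ⊔ MeasurableSpace.comap (w (τ + 1)) inferInstance :=
    noiseFiltration_succ w τ
  have hG'le : noiseFiltration w 0 (τ + 1) ≤ m0 := noiseFiltration_le w hw (τ + 1)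
  obtain ⟨P, hP⟩ := exists_isPartition _ (finite_range_joint w hτ.le hfin)
    (noiseFiltration_eq_comap w τ)
  obtain ⟨Q, hQ⟩ := exists_isPartition (w (τ + 1))
    (hfin (τ + 1) (by omega) (by omega)) rfl
  have hprod : ∀ {A : Set Ω}, MeasurableSet[noiseFiltration w 0 τ] A →
      ∀ B ∈ Q, μ (A ∩ B) = μ A * μ B :=
    fun {A} hA B hB => measure_inter_of_indep w hw hindep hτ hA (hQ.meas B hB)
  have hsepAB : ∀ A ∈ P, ∀ B ∈ Q, ∀ S, MeasurableSet[noiseFiltration w 0 (τ + 1)] S →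
      ∀ ω ∈ A ∩ B, ∀ ω' ∈ A ∩ B, (ω ∈ S ↔ ω' ∈ S) := by
    intro A hA B hB S hS
    exact sep_sup (hP.sep A hA) (hQ.sep B hB) S (by rw [← hG'eq]; exact hS)
  haveI : SigmaFinite (μ.trim hGle) := by
    haveI : IsFiniteMeasure (μ.trim hGle) := isFiniteMeasure_trim hGle
    infer_instance
  refine le_antisymm ?dir2 ?dir1
  case dir1 =>
    conv_rhs => rw [valueUpTo]
    refine le_iInf fun U => le_iInf fun V => le_iInf fun X => le_iInf fun Z =>
      le_iInf fun hadm => ?_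
    obtain ⟨hX0, hXdyn, hU, hV, hZ0, hZdyn⟩ := hadm
    have hadmτ : AdmissibleUpTo μ w f x0 z0 τ U V X Z :=
      ⟨hX0, fun t ht => hXdyn t (Nat.lt_succ_of_lt ht), fun t ht => hU t (Nat.lt_succ_of_lt ht),
        fun t ht => hV t (Nat.lt_succ_of_lt ht), hZ0, fun t ht => hZdyn t (Nat.lt_succ_of_lt ht)⟩
    have hXZ := measurable_XZ hf hadmτ
    have hXτ : Measurable[noiseFiltration w 0 τ] (X τ) := (hXZ τ le_rfl).1
    have hZτ : Measurable[noiseFiltration w 0 τ] (Z τ) := (hXZ τ le_rfl).2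
    have hUτ : Measurable[noiseFiltration w 0 τ] (U τ) :=
      Measurable.of_comap_le (hU τ (Nat.lt_succ_self τ))
    have hVτ : Measurable[noiseFiltration w 0 (τ+1)] (V τ) :=
      Measurable.of_comap_le (hV τ (Nat.lt_succ_self τ)).2.1
    have hwτ : Measurable[MeasurableSpace.comap (w (τ+1)) inferInstance] (w (τ+1)) :=
      Measurable.of_comap_le le_rfl
    have hVτint : Integrable (V τ) μ := (hV τ (Nat.lt_succ_self τ)).1
    have hVτcond := (hV τ (Nat.lt_succ_self τ)).2.2
    have hsum : Measurable (fun ω => ∑ t ∈ Finset.range τ, L t (X t ω) (U t ω) (w (t+1) ω)) := by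
      refine Finset.measurable_sum _ fun t ht => ?_
      have ht' : t < τ := Finset.mem_range.1 ht
      have hXt : Measurable[noiseFiltration w 0 (t+1)] (X t) :=
        ((hXZ t ht'.le).1).mono (noiseFiltration_mono w (Nat.le_succ t)) le_rfl
      have hUt : Measurable[noiseFiltration w 0 (t+1)] (U t) :=
        (Measurable.of_comap_le (hU t (Nat.lt_succ_of_lt ht'))).mono
          (noiseFiltration_mono w (Nat.le_succ t)) le_rfl
      have hwt : Measurable[noiseFiltration w 0 (t+1)] (w (t+1)) := by
        refine Measurable.of_comap_le ?_
        rw [noiseFiltration_succ]; exact le_sup_right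
      exact (((hL t).comp (hXt.prodMk (hUt.prodMk hwt))).mono
        (noiseFiltration_le w hw (t+1)) le_rfl)
    have hintrw : ∀ ω : Ω, (∑ t ∈ Finset.range (τ+1), L t (X t ω) (U t ω) (w (t + 1) ω))
        + 𝒱 (τ+1) (X (τ+1) ω) (Z (τ+1) ω)
        = (∑ t ∈ Finset.range τ, L t (X t ω) (U t ω) (w (t + 1) ω))
          + (L τ (X τ ω) (U τ ω) (w (τ+1) ω)
            + 𝒱 (τ+1) (f τ (X τ ω) (U τ ω) (w (τ+1) ω)) (Z τ ω + V τ ω)) := by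
      intro ω
      rw [Finset.sum_range_succ, hXdyn τ (Nat.lt_succ_self τ) ω, hZdyn τ (Nat.lt_succ_self τ) ω,
        add_assoc]
    set Φ : Ω → ℝ≥0∞ := fun ω => L τ (X τ ω) (U τ ω) (w (τ+1) ω)
      + 𝒱 (τ+1) (f τ (X τ ω) (U τ ω) (w (τ+1) ω)) (Z τ ω + V τ ω) with hΦdef
    have h𝒱τmeas : Measurable[noiseFiltration w 0 τ] (fun ω => 𝒱 τ (X τ ω) (Z τ ω)) :=
      (h𝒱meas τ).comp (hXτ.prodMk hZτ)
    have hCORE : ∫⁻ ω, 𝒱 τ (X τ ω) (Z τ ω) ∂μ ≤ ∫⁻ ω, Φ ω ∂μ := by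
      rw [hP.lintegral_eq_sum hGle, hP.lintegral_eq_sum hGle Φ]
      refine Finset.sum_le_sum fun A hA => ?_
      by_cases hμA : μ A = 0
      · rw [Measure.restrict_eq_zero.2 hμA, lintegral_zero_measure]
        exact zero_le
      · have hAne : A.Nonempty := by
          rcases Set.eq_empty_or_nonempty A with h | h
          · exact absurd (by rw [h]; exact measure_empty) hμA
          · exact h
        obtain ⟨ωA, hωA⟩ := hAne
        set vB : Set Ω → (Fin m → ℝ) := fun B =>
          if h : (A ∩ B).Nonempty then V τ h.some else 0 with hvBdef
        set Vn : Ω → Fin m → ℝ := fun ω => ∑ B ∈ Q, B.indicator (fun _ => vB B) ω with hVndef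
        have hVnmeas : Measurable[MeasurableSpace.comap (w (τ+1)) inferInstance] Vn :=
          Finset.measurable_sum _ fun B hB => measurable_const.indicator (hQ.meas B hB)
        have hVnint : Integrable Vn μ :=
          integrable_finset_sum _ fun B hB =>
            (integrable_const _).indicator (hHle _ (hQ.meas B hB))
        have hagreeV : ∀ ω ∈ A, V τ ω = Vn ω := by
          intro ω hω
          obtain ⟨B₀, hB₀, hωB₀⟩ := hQ.cover ω
          have h1 : Vn ω = vB B₀ :=
            sum_indicator_apply hQ.uniq (fun B _ => vB B) hB₀ hωB₀
          have hne : (A ∩ B₀).Nonempty := ⟨ω, hω, hωB₀⟩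
          rw [h1, hvBdef]
          simp only [dif_pos hne]
          exact eq_on_of_sep (hsepAB A hA B₀ hB₀) hVτ ⟨hω, hωB₀⟩ hne.some_mem
        have hintA : ∫ ω in A, V τ ω ∂μ = 0 := by
          have h1 := setIntegral_condExp hGle hVτint (hP.meas A hA)
          have h2 : ∫ ω in A, (μ[V τ|noiseFiltration w 0 τ]) ω ∂μ = 0 := by
            rw [setIntegral_congr_ae (hGle _ (hP.meas A hA))
              (hVτcond.mono fun ω hω _ => hω)]
            simp
          rw [← h1, h2]
        have hmean : ∫ ω, Vn ω ∂μ = 0 := by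
          have h3 := integral_restrict_eq_smul hGle hHle hQ (hP.meas A hA)
            (hprod (hP.meas A hA)) hVnmeas hagreeV hVτint hVnint
          rw [hintA] at h3
          have hμAne : (μ A).toReal ≠ 0 :=
            ENNReal.toReal_ne_zero.2 ⟨hμA, measure_ne_top μ A⟩
          rcases smul_eq_zero.1 h3.symm with h | h
          · exact absurd h hμAne
          · exact h
        set xA := X τ ωA with hxAdef
        set zA := Z τ ωA with hzAdef
        set uA := U τ ωA with huAdef
        have hZconst : ∀ ω ∈ A, Z τ ω = zA := fun ω hω =>
          eq_on_of_sep (hP.sep A hA) hZτ hω hωA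
        set Ψ : Ω → ℝ≥0∞ := fun ω => L τ xA uA (w (τ+1) ω)
          + 𝒱 (τ+1) (f τ xA uA (w (τ+1) ω)) (zA + Vn ω) with hΨdef
        have hΨmeas : Measurable[MeasurableSpace.comap (w (τ+1)) inferInstance] Ψ := by
          have hLsec : Measurable (fun p : 𝕎 (τ+1) => L τ xA uA p) :=
            (hL τ).comp (measurable_const.prodMk (measurable_const.prodMk measurable_id))
          have hfsec : Measurable (fun p : 𝕎 (τ+1) => f τ xA uA p) :=
            (hf τ).comp (measurable_const.prodMk (measurable_const.prodMk measurable_id))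
          exact (hLsec.comp hwτ).add
            ((h𝒱meas (τ+1)).comp (((hfsec.comp hwτ)).prodMk (measurable_const.add hVnmeas)))
        have hBel : 𝒱 τ xA zA ≤ ∫⁻ ω, Ψ ω ∂μ := by
          rw [h𝒱rec τ hτ xA zA]
          exact iInf_le_of_le uA (iInf_le_of_le Vn (iInf_le_of_le
            (measurable_iff_comap_le.1 hVnmeas) (iInf_le_of_le hVnint
            (iInf_le_of_le hmean le_rfl))))
        have hagreeΦΨ : ∀ ω ∈ A, Φ ω = Ψ ω := by
          intro ω hω
          have hVω : V τ ω = Vn ω := hagreeV ω hω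
          set g1 : Ω → ℝ≥0∞ := fun ω₁ => L τ (X τ ω₁) (U τ ω₁) (w (τ+1) ω)
            + 𝒱 (τ+1) (f τ (X τ ω₁) (U τ ω₁) (w (τ+1) ω)) (zA + V τ ω) with hg1def
          have hg1meas : Measurable[noiseFiltration w 0 τ] g1 := by
            have hLsec : Measurable (fun p : 𝕏 τ × 𝕌 τ => L τ p.1 p.2 (w (τ+1) ω)) :=
              (hL τ).comp (measurable_fst.prodMk (measurable_snd.prodMk measurable_const))
            have hfsec : Measurable (fun p : 𝕏 τ × 𝕌 τ => f τ p.1 p.2 (w (τ+1) ω)) :=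
              (hf τ).comp (measurable_fst.prodMk (measurable_snd.prodMk measurable_const))
            exact (hLsec.comp (hXτ.prodMk hUτ)).add
              ((h𝒱meas (τ+1)).comp ((hfsec.comp (hXτ.prodMk hUτ)).prodMk measurable_const))
          have hconst : g1 ω = g1 ωA := eq_on_of_sep (hP.sep A hA) hg1meas hω hωA
          have hΦg : Φ ω = g1 ω := by
            simp only [hΦdef, hg1def]
            rw [hZconst ω hω]
          have hΨg : Ψ ω = g1 ωA := by
            simp only [hΨdef, hg1def]
            rw [hVω]
          rw [hΦg, hconst, hΨg]
        have hintΦ : ∫⁻ ω in A, Φ ω ∂μ = μ A * ∫⁻ ω, Ψ ω ∂μ :=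
          lintegral_restrict_eq_mul hGle hHle hQ (hP.meas A hA)
            (hprod (hP.meas A hA)) hΨmeas hagreeΦΨ
        have hint𝒱 : ∫⁻ ω in A, 𝒱 τ (X τ ω) (Z τ ω) ∂μ = 𝒱 τ xA zA * μ A :=
          setLIntegral_of_sep hGle (hP.meas A hA) (hP.sep A hA) h𝒱τmeas hωA
        rw [hintΦ, hint𝒱, mul_comm (𝒱 τ xA zA) (μ A)]
        exact mul_le_mul_right hBel (μ A)
    calc valueUpTo μ w f L 𝒱 x0 z0 τ
        ≤ ∫⁻ ω, (∑ t ∈ Finset.range τ, L t (X t ω) (U t ω) (w (t + 1) ω))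
          + 𝒱 τ (X τ ω) (Z τ ω) ∂μ := by
          rw [valueUpTo]
          exact iInf_le_of_le U (iInf_le_of_le V (iInf_le_of_le X (iInf_le_of_le Z
            (iInf_le_of_le hadmτ le_rfl))))
      _ = (∫⁻ ω, (∑ t ∈ Finset.range τ, L t (X t ω) (U t ω) (w (t + 1) ω)) ∂μ)
          + ∫⁻ ω, 𝒱 τ (X τ ω) (Z τ ω) ∂μ := lintegral_add_left hsum _
      _ ≤ (∫⁻ ω, (∑ t ∈ Finset.range τ, L t (X t ω) (U t ω) (w (t + 1) ω)) ∂μ)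
          + ∫⁻ ω, Φ ω ∂μ := add_le_add_right hCORE _
      _ = ∫⁻ ω, (∑ t ∈ Finset.range (τ+1), L t (X t ω) (U t ω) (w (t + 1) ω))
          + 𝒱 (τ+1) (X (τ+1) ω) (Z (τ+1) ω) ∂μ := by
          rw [← lintegral_add_left hsum Φ]
          exact lintegral_congr fun ω => (hintrw ω).symm

  case dir2 =>
    conv_rhs => rw [valueUpTo]
    refine le_iInf fun U => le_iInf fun V => le_iInf fun X => le_iInf fun Z =>
      le_iInf fun hadm => ?_
    refine ENNReal.le_of_forall_pos_le_add fun ε hε _ => ?_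
    have hεpos : (ε : ℝ≥0∞) ≠ 0 := by exact_mod_cast hε.ne'
    obtain ⟨hX0, hXdyn, hU, hV, hZ0, hZdyn⟩ := hadm
    have hXZ := measurable_XZ hf ⟨hX0, hXdyn, hU, hV, hZ0, hZdyn⟩
    have hXτ : Measurable[noiseFiltration w 0 τ] (X τ) := (hXZ τ le_rfl).1
    have hZτ : Measurable[noiseFiltration w 0 τ] (Z τ) := (hXZ τ le_rfl).2
    have hwτ : Measurable[MeasurableSpace.comap (w (τ+1)) inferInstance] (w (τ+1)) :=
      Measurable.of_comap_le le_rfl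
    have h𝒱τmeas : Measurable[noiseFiltration w 0 τ] (fun ω => 𝒱 τ (X τ ω) (Z τ ω)) :=
      (h𝒱meas τ).comp (hXτ.prodMk hZτ)
    have hsum : Measurable (fun ω => ∑ t ∈ Finset.range τ, L t (X t ω) (U t ω) (w (t+1) ω)) := by
      refine Finset.measurable_sum _ fun t ht => ?_
      have ht' : t < τ := Finset.mem_range.1 ht
      have hXt : Measurable[noiseFiltration w 0 (t+1)] (X t) :=
        ((hXZ t ht'.le).1).mono (noiseFiltration_mono w (Nat.le_succ t)) le_rfl
      have hUt : Measurable[noiseFiltration w 0 (t+1)] (U t) :=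
        (Measurable.of_comap_le (hU t ht')).mono
          (noiseFiltration_mono w (Nat.le_succ t)) le_rfl
      have hwt : Measurable[noiseFiltration w 0 (t+1)] (w (t+1)) := by
        refine Measurable.of_comap_le ?_
        rw [noiseFiltration_succ]; exact le_sup_right
      exact (((hL t).comp (hXt.prodMk (hUt.prodMk hwt))).mono
        (noiseFiltration_le w hw (t+1)) le_rfl)
    -- near-optimal selections from the Bellman recursion
    have key : ∀ (x : 𝕏 τ) (z : Fin m → ℝ), ∃ (u : 𝕌 τ) (Vn : Ω → Fin m → ℝ),
        MeasurableSpace.comap Vn inferInstance ≤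
          MeasurableSpace.comap (w (τ+1)) inferInstance ∧ Integrable Vn μ ∧
        (∫ ω, Vn ω ∂μ) = 0 ∧
        ∫⁻ ω, L τ x u (w (τ+1) ω) + 𝒱 (τ+1) (f τ x u (w (τ+1) ω)) (z + Vn ω) ∂μ
          ≤ 𝒱 τ x z + ε := by
      intro x z
      by_cases hv : 𝒱 τ x z = ⊤
      · refine ⟨Classical.arbitrary _, fun _ => 0, Measurable.comap_le measurable_const,
          integrable_const 0, by simp, ?_⟩
        rw [hv, top_add]
        exact le_top
      · have hlt : 𝒱 τ x z < 𝒱 τ x z + ε := ENNReal.lt_add_right hv hεpos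
        nth_rewrite 1 [h𝒱rec τ hτ x z] at hlt
        simp only [iInf_lt_iff] at hlt
        obtain ⟨u, Vn, hc, hi, hm', hval⟩ := hlt
        exact ⟨u, Vn, hc, hi, hm', hval.le⟩
    choose uSel VnSel hcomapSel hintSel hmeanSel hvalSel using key
    -- the piece containing a point, and a base point of each piece
    have hpiece : ∀ ω : Ω, ∃ A, A ∈ P ∧ ω ∈ A := fun ω => by
      obtain ⟨A, hA, h⟩ := hP.cover ω; exact ⟨A, hA, h⟩
    choose pieceOf hpieceMem hpieceIn using hpiece
    have hpieceEq : ∀ {A : Set Ω} {ω : Ω}, A ∈ P → ω ∈ A → pieceOf ω = A :=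
      fun {A ω} hA hω => hP.uniq _ (hpieceMem ω) A hA ω (hpieceIn ω) hω
    set pt : Set Ω → Ω := fun A => if h : A.Nonempty then h.some else Classical.arbitrary Ω
      with hptdef
    have hptmem : ∀ {A : Set Ω}, A.Nonempty → pt A ∈ A := fun {A} h => by
      simp only [hptdef, dif_pos h]; exact h.some_mem
    -- the extended controls
    set uA : Set Ω → 𝕌 τ := fun A => uSel (X τ (pt A)) (Z τ (pt A)) with huAdef
    set VA : Set Ω → Ω → Fin m → ℝ := fun A => VnSel (X τ (pt A)) (Z τ (pt A)) with hVAdef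
    set Uτ' : Ω → 𝕌 τ := fun ω => uA (pieceOf ω) with hUτ'def
    set Vτ' : Ω → Fin m → ℝ := fun ω => ∑ A ∈ P, A.indicator (VA A) ω with hVτ'def
    set U' : (t : ℕ) → Ω → 𝕌 t := Function.update U τ Uτ' with hU'def
    set V' : ℕ → Ω → Fin m → ℝ := Function.update V τ Vτ' with hV'def
    set X' : (t : ℕ) → Ω → 𝕏 t :=
      Function.update X (τ+1) (fun ω => f τ (X τ ω) (Uτ' ω) (w (τ+1) ω)) with hX'def
    set Z' : ℕ → Ω → Fin m → ℝ :=
      Function.update Z (τ+1) (fun ω => Z τ ω + Vτ' ω) with hZ'def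
    have hUτ'meas : Measurable[noiseFiltration w 0 τ] Uτ' := by
      intro S hS
      have hset : Uτ' ⁻¹' S = ⋃ A ∈ P.filter (fun A => uA A ∈ S), A := by
        ext ω
        simp only [Set.mem_preimage, Set.mem_iUnion, Finset.mem_filter, exists_prop]
        constructor
        · intro h
          exact ⟨pieceOf ω, ⟨hpieceMem ω, h⟩, hpieceIn ω⟩
        · rintro ⟨A, ⟨hA, hAS⟩, hωA⟩
          have hpe : pieceOf ω = A := hpieceEq hA hωA
          simp only [hUτ'def]
          rw [hpe]
          exact hAS
      rw [hset]
      exact (P.filter _).measurableSet_biUnion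
        (fun A hA => hP.meas A (Finset.mem_filter.1 hA).1)
    have hVAmeasH : ∀ A, Measurable[MeasurableSpace.comap (w (τ+1)) inferInstance] (VA A) :=
      fun A => Measurable.of_comap_le (hcomapSel _ _)
    have hVτ'measG' : Measurable[noiseFiltration w 0 (τ+1)] Vτ' := by
      refine Finset.measurable_sum _ fun A hA => Measurable.indicator ?_ ?_
      · exact (hVAmeasH A).mono (by rw [hG'eq]; exact le_sup_right) le_rfl
      · exact (noiseFiltration_mono w (Nat.le_succ τ)) _ (hP.meas A hA)
    have hVτ'int : Integrable Vτ' μ :=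
      integrable_finset_sum _ fun A hA => (hintSel _ _).indicator (hGle _ (hP.meas A hA))
    have hVτ'on : ∀ A ∈ P, ∀ ω ∈ A, Vτ' ω = VA A ω := by
      intro A hA ω hω
      simp only [hVτ'def]
      exact sum_indicator_apply hP.uniq VA hA hω
    have hVτ'zero : ∀ A ∈ P, ∫ ω in A, Vτ' ω ∂μ = 0 := by
      intro A hA
      have h3 := integral_restrict_eq_smul hGle hHle hQ (hP.meas A hA)
        (hprod (hP.meas A hA)) (hVAmeasH A) (fun ω hω => hVτ'on A hA ω hω)
        hVτ'int (hintSel _ _)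
      rw [h3, hmeanSel, smul_zero]
    have hVτ'cond : μ[Vτ' | noiseFiltration w 0 τ] =ᵐ[μ] 0 := by
      refine (ae_eq_condExp_of_forall_setIntegral_eq hGle hVτ'int
        (fun s _ _ => integrableOn_zero) (fun s hs _ => ?_) ?_).symm
      · have hseq : s = ⋃ A ∈ P.filter (fun A => A ⊆ s), A := by
          ext ω
          simp only [Set.mem_iUnion, Finset.mem_filter, exists_prop]
          constructor
          · intro hω
            exact ⟨pieceOf ω, ⟨hpieceMem ω,
              hP.subset_of_mem_sep hs (hpieceMem ω) (hpieceIn ω) hω⟩, hpieceIn ω⟩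
          · rintro ⟨A, ⟨hA, hAs⟩, hωA⟩
            exact hAs hωA
        have h1 : ∫ ω in s, Vτ' ω ∂μ
            = ∑ A ∈ P.filter (fun A => A ⊆ s), ∫ ω in A, Vτ' ω ∂μ := by
          conv_lhs => rw [hseq]
          refine integral_biUnion_finset _
            (fun A hA => hGle _ (hP.meas A (Finset.mem_filter.1 hA).1)) ?_
            (fun A hA => hVτ'int.integrableOn)
          intro A hA B hB hne
          exact hP.pairwiseDisjoint
            (Finset.mem_coe.2 (Finset.filter_subset _ _ (Finset.mem_coe.1 hA)))
            (Finset.mem_coe.2 (Finset.filter_subset _ _ (Finset.mem_coe.1 hB))) hne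
        have h2 : ∫ ω in s, Vτ' ω ∂μ = 0 := by
          rw [h1]
          exact Finset.sum_eq_zero fun A hA => hVτ'zero A (Finset.mem_filter.1 hA).1
        rw [h2]
        simp
      · exact StronglyMeasurable.aestronglyMeasurable stronglyMeasurable_zero
    have hadm' : AdmissibleUpTo μ w f x0 z0 (τ+1) U' V' X' Z' := by
      refine ⟨?_, ?_, ?_, ?_, ?_, ?_⟩
      · intro ω
        have e : X' 0 = X 0 := Function.update_of_ne (by omega) _ _
        rw [e]; exact hX0 ω
      · intro t ht ω
        rcases Nat.lt_succ_iff_lt_or_eq.1 ht with ht' | heq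
        · have e1 : X' (t+1) = X (t+1) := Function.update_of_ne (by omega) _ _
          have e2 : X' t = X t := Function.update_of_ne (by omega) _ _
          have e3 : U' t = U t := Function.update_of_ne (by omega) _ _
          rw [e1, e2, e3]; exact hXdyn t ht' ω
        · obtain rfl := heq.symm
          have e1 : X' (τ+1) = fun ω => f τ (X τ ω) (Uτ' ω) (w (τ+1) ω) :=
            Function.update_self _ _ _
          have e2 : X' τ = X τ := Function.update_of_ne (by omega) _ _
          have e3 : U' τ = Uτ' := Function.update_self _ _ _
          rw [e1, e2, e3]
      · intro t ht
        rcases Nat.lt_succ_iff_lt_or_eq.1 ht with ht' | heq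
        · have e3 : U' t = U t := Function.update_of_ne (by omega) _ _
          rw [e3]; exact hU t ht'
        · obtain rfl := heq.symm
          have e3 : U' τ = Uτ' := Function.update_self _ _ _
          rw [e3]; exact hUτ'meas.comap_le
      · intro t ht
        rcases Nat.lt_succ_iff_lt_or_eq.1 ht with ht' | heq
        · have e : V' t = V t := Function.update_of_ne (by omega) _ _
          rw [e]; exact hV t ht'
        · obtain rfl := heq.symm
          have e : V' τ = Vτ' := Function.update_self _ _ _
          rw [e]
          exact ⟨hVτ'int, hVτ'measG'.comap_le, hVτ'cond⟩
      · intro ω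
        have e : Z' 0 = Z 0 := Function.update_of_ne (by omega) _ _
        rw [e]; exact hZ0 ω
      · intro t ht ω
        rcases Nat.lt_succ_iff_lt_or_eq.1 ht with ht' | heq
        · have e1 : Z' (t+1) = Z (t+1) := Function.update_of_ne (by omega) _ _
          have e2 : Z' t = Z t := Function.update_of_ne (by omega) _ _
          have e3 : V' t = V t := Function.update_of_ne (by omega) _ _
          rw [e1, e2, e3]; exact hZdyn t ht' ω
        · obtain rfl := heq.symm
          have e1 : Z' (τ+1) = fun ω => Z τ ω + Vτ' ω := Function.update_self _ _ _
          have e2 : Z' τ = Z τ := Function.update_of_ne (by omega) _ _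
          have e3 : V' τ = Vτ' := Function.update_self _ _ _
          rw [e1, e2, e3]
    set Φ : Ω → ℝ≥0∞ := fun ω => L τ (X τ ω) (Uτ' ω) (w (τ+1) ω)
      + 𝒱 (τ+1) (f τ (X τ ω) (Uτ' ω) (w (τ+1) ω)) (Z τ ω + Vτ' ω) with hΦdef
    have hintrw : ∀ ω : Ω, (∑ t ∈ Finset.range (τ+1), L t (X' t ω) (U' t ω) (w (t + 1) ω))
        + 𝒱 (τ+1) (X' (τ+1) ω) (Z' (τ+1) ω)
        = (∑ t ∈ Finset.range τ, L t (X t ω) (U t ω) (w (t + 1) ω)) + Φ ω := by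
      intro ω
      have e1 : X' (τ+1) = fun ω => f τ (X τ ω) (Uτ' ω) (w (τ+1) ω) :=
        Function.update_self _ _ _
      have e2 : Z' (τ+1) = fun ω => Z τ ω + Vτ' ω := Function.update_self _ _ _
      have e3 : U' τ = Uτ' := Function.update_self _ _ _
      have e4 : X' τ = X τ := Function.update_of_ne (by omega) _ _
      have e5 : ∑ t ∈ Finset.range τ, L t (X' t ω) (U' t ω) (w (t + 1) ω)
          = ∑ t ∈ Finset.range τ, L t (X t ω) (U t ω) (w (t + 1) ω) := by
        refine Finset.sum_congr rfl fun t ht => ?_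
        have ht' : t < τ := Finset.mem_range.1 ht
        have eX : X' t = X t := Function.update_of_ne (by omega) _ _
        have eU : U' t = U t := Function.update_of_ne (by omega) _ _
        rw [eX, eU]
      rw [Finset.sum_range_succ, e1, e2, e3, e4, e5, add_assoc]
    have hCORE2 : ∫⁻ ω, Φ ω ∂μ ≤ (∫⁻ ω, 𝒱 τ (X τ ω) (Z τ ω) ∂μ) + ε := by
      rw [hP.lintegral_eq_sum hGle Φ,
        hP.lintegral_eq_sum hGle (fun ω => 𝒱 τ (X τ ω) (Z τ ω))]
      have hsum_eps : (ε : ℝ≥0∞) = ∑ A ∈ P, μ A * ε := by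
        rw [← Finset.sum_mul, hP.sum_measure hGle, one_mul]
      rw [hsum_eps, ← Finset.sum_add_distrib]
      refine Finset.sum_le_sum fun A hA => ?_
      by_cases hμA : μ A = 0
      · rw [Measure.restrict_eq_zero.2 hμA, lintegral_zero_measure]
        exact zero_le
      · have hAne : A.Nonempty := by
          rcases Set.eq_empty_or_nonempty A with h | h
          · exact absurd (by rw [h]; exact measure_empty) hμA
          · exact h
        have hpt : pt A ∈ A := hptmem hAne
        have hZconst : ∀ ω ∈ A, Z τ ω = Z τ (pt A) := fun ω hω =>
          eq_on_of_sep (hP.sep A hA) hZτ hω hpt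
        set Ψ : Ω → ℝ≥0∞ := fun ω => L τ (X τ (pt A)) (uA A) (w (τ+1) ω)
          + 𝒱 (τ+1) (f τ (X τ (pt A)) (uA A) (w (τ+1) ω)) (Z τ (pt A) + VA A ω) with hΨdef
        have hΨmeas : Measurable[MeasurableSpace.comap (w (τ+1)) inferInstance] Ψ := by
          have hLsec : Measurable (fun p : 𝕎 (τ+1) => L τ (X τ (pt A)) (uA A) p) :=
            (hL τ).comp (measurable_const.prodMk (measurable_const.prodMk measurable_id))
          have hfsec : Measurable (fun p : 𝕎 (τ+1) => f τ (X τ (pt A)) (uA A) p) :=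
            (hf τ).comp (measurable_const.prodMk (measurable_const.prodMk measurable_id))
          exact (hLsec.comp hwτ).add
            ((h𝒱meas (τ+1)).comp (((hfsec.comp hwτ)).prodMk
              (measurable_const.add (hVAmeasH A))))
        have hagree : ∀ ω ∈ A, Φ ω = Ψ ω := by
          intro ω hω
          have hU'ω : Uτ' ω = uA A := by
            simp only [hUτ'def]
            rw [hpieceEq hA hω]
          have hV'ω : Vτ' ω = VA A ω := hVτ'on A hA ω hω
          set g1 : Ω → ℝ≥0∞ := fun ω₁ => L τ (X τ ω₁) (uA A) (w (τ+1) ω)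
            + 𝒱 (τ+1) (f τ (X τ ω₁) (uA A) (w (τ+1) ω)) (Z τ (pt A) + VA A ω) with hg1def
          have hg1meas : Measurable[noiseFiltration w 0 τ] g1 := by
            have hLsec : Measurable (fun x : 𝕏 τ => L τ x (uA A) (w (τ+1) ω)) :=
              (hL τ).comp (measurable_id.prodMk
                (measurable_const.prodMk measurable_const))
            have hfsec : Measurable (fun x : 𝕏 τ => f τ x (uA A) (w (τ+1) ω)) :=
              (hf τ).comp (measurable_id.prodMk
                (measurable_const.prodMk measurable_const))
            exact (hLsec.comp hXτ).add
              ((h𝒱meas (τ+1)).comp ((hfsec.comp hXτ).prodMk measurable_const))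
          have hconst : g1 ω = g1 (pt A) := eq_on_of_sep (hP.sep A hA) hg1meas hω hpt
          have hΦg : Φ ω = g1 ω := by
            simp only [hΦdef, hg1def]
            rw [hU'ω, hV'ω, hZconst ω hω]
          have hΨg : Ψ ω = g1 (pt A) := by
            simp only [hΨdef, hg1def]
          rw [hΦg, hconst, hΨg]
        have h1 : ∫⁻ ω in A, Φ ω ∂μ = μ A * ∫⁻ ω, Ψ ω ∂μ :=
          lintegral_restrict_eq_mul hGle hHle hQ (hP.meas A hA)
            (hprod (hP.meas A hA)) hΨmeas hagree
        have h2 : ∫⁻ ω, Ψ ω ∂μ ≤ 𝒱 τ (X τ (pt A)) (Z τ (pt A)) + ε := by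
          have h := hvalSel (X τ (pt A)) (Z τ (pt A))
          simp only [hΨdef, huAdef, hVAdef]
          exact h
        have h3 : ∫⁻ ω in A, 𝒱 τ (X τ ω) (Z τ ω) ∂μ
            = 𝒱 τ (X τ (pt A)) (Z τ (pt A)) * μ A :=
          setLIntegral_of_sep hGle (hP.meas A hA) (hP.sep A hA) h𝒱τmeas hpt
        calc ∫⁻ ω in A, Φ ω ∂μ = μ A * ∫⁻ ω, Ψ ω ∂μ := h1
          _ ≤ μ A * (𝒱 τ (X τ (pt A)) (Z τ (pt A)) + ε) := mul_le_mul_right h2 _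
          _ = 𝒱 τ (X τ (pt A)) (Z τ (pt A)) * μ A + μ A * ε := by ring
          _ = (∫⁻ ω in A, 𝒱 τ (X τ ω) (Z τ ω) ∂μ) + μ A * ε := by rw [h3]
    calc valueUpTo μ w f L 𝒱 x0 z0 (τ+1)
        ≤ ∫⁻ ω, (∑ t ∈ Finset.range (τ+1), L t (X' t ω) (U' t ω) (w (t + 1) ω))
          + 𝒱 (τ+1) (X' (τ+1) ω) (Z' (τ+1) ω) ∂μ := by
          rw [valueUpTo]
          exact iInf_le_of_le U' (iInf_le_of_le V' (iInf_le_of_le X' (iInf_le_of_le Z'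
            (iInf_le_of_le hadm' le_rfl))))
      _ = (∫⁻ ω, (∑ t ∈ Finset.range τ, L t (X t ω) (U t ω) (w (t + 1) ω)) ∂μ)
          + ∫⁻ ω, Φ ω ∂μ := by
          rw [← lintegral_add_left hsum Φ]
          exact lintegral_congr hintrw
      _ ≤ (∫⁻ ω, (∑ t ∈ Finset.range τ, L t (X t ω) (U t ω) (w (t + 1) ω)) ∂μ)
          + ((∫⁻ ω, 𝒱 τ (X τ ω) (Z τ ω) ∂μ) + ε) := add_le_add_right hCORE2 _
      _ = (∫⁻ ω, (∑ t ∈ Finset.range τ, L t (X t ω) (U t ω) (w (t + 1) ω))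
          + 𝒱 τ (X τ ω) (Z τ ω) ∂μ) + ε := by
          rw [← add_assoc, ← lintegral_add_left hsum]


end BellmanAux


/-- **Backward induction step for the extended problem (proof of Theorem 2).**
Under independence and finiteness of the noises and measurability of the Bellman
functions, the value `W_τ` of the truncated problem is constant in `τ`; in particular
`W_T = 𝒱_0(x_0, z_0)`. -/
theorem valueUpTo_stationary
    {Ω : Type*} [MeasurableSpace Ω] {T m : ℕ}
    {𝕏 : ℕ → Type*} [∀ t, MeasurableSpace (𝕏 t)] [∀ t, Nonempty (𝕏 t)]
    {𝕌 : ℕ → Type*} [∀ t, MeasurableSpace (𝕌 t)] [∀ t, Nonempty (𝕌 t)]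
    {𝕎 : ℕ → Type*} [∀ t, MeasurableSpace (𝕎 t)]
    (μ : Measure Ω) [IsProbabilityMeasure μ]
    (w : (t : ℕ) → Ω → 𝕎 t) (hw : ∀ t, Measurable (w t))
    (hindep : iIndepFun
      (fun t : Fin T => w (t.1 + 1)) μ)
    (hfin : ∀ t, 1 ≤ t → t ≤ T → (Set.range (w t)).Finite)
    (f : (t : ℕ) → 𝕏 t → 𝕌 t → 𝕎 (t + 1) → 𝕏 (t + 1))
    (hf : ∀ t, Measurable fun p : 𝕏 t × 𝕌 t × 𝕎 (t + 1) => f t p.1 p.2.1 p.2.2)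
    (L : (t : ℕ) → 𝕏 t → 𝕌 t → 𝕎 (t + 1) → ℝ≥0∞)
    (hL : ∀ t, Measurable fun p : 𝕏 t × 𝕌 t × 𝕎 (t + 1) => L t p.1 p.2.1 p.2.2)
    (K : 𝕏 T → ℝ≥0∞) (hK : Measurable K)
    (g : 𝕏 T → Fin m → ℝ) (hg : Measurable g) (hgpos : ∀ x i, 0 ≤ g x i)
    -- the Bellman functions
    (𝒱 : (t : ℕ) → 𝕏 t → (Fin m → ℝ) → ℝ≥0∞)
    (h𝒱meas : ∀ t, Measurable fun p : 𝕏 t × (Fin m → ℝ) => 𝒱 t p.1 p.2)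
    (h𝒱T : ∀ (x : 𝕏 T) (z : Fin m → ℝ),
      ((∀ i, g x i ≤ z i) → 𝒱 T x z = K x) ∧ (¬ (∀ i, g x i ≤ z i) → 𝒱 T x z = ⊤))
    (h𝒱rec : ∀ t, t < T → ∀ (x : 𝕏 t) (z : Fin m → ℝ),
      𝒱 t x z =
        ⨅ (u : 𝕌 t) (V : Ω → Fin m → ℝ)
          (_ : MeasurableSpace.comap V inferInstance ≤
                MeasurableSpace.comap (w (t + 1)) inferInstance)
          (_ : Integrable V μ) (_ : ∫ ω, V ω ∂μ = 0),
          ∫⁻ ω, L t x u (w (t + 1) ω) + 𝒱 (t + 1) (f t x u (w (t + 1) ω)) (z + V ω) ∂μ)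
    (x0 : 𝕏 0) (z0 : Fin m → ℝ) :
    (∀ τ, τ < T → valueUpTo μ w f L 𝒱 x0 z0 (τ + 1) = valueUpTo μ w f L 𝒱 x0 z0 τ) ∧
    valueUpTo μ w f L 𝒱 x0 z0 T = 𝒱 0 x0 z0 := by
  classical
  have hstep : ∀ τ, τ < T → valueUpTo μ w f L 𝒱 x0 z0 (τ + 1) = valueUpTo μ w f L 𝒱 x0 z0 τ :=
    fun τ hτ => BellmanAux.step μ w hw hindep hfin f hf L hL 𝒱 h𝒱meas h𝒱rec x0 z0 hτ
  refine ⟨hstep, ?_⟩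
  have hW0 : valueUpTo μ w f L 𝒱 x0 z0 0 = 𝒱 0 x0 z0 := by
    refine le_antisymm ?_ ?_
    · rw [valueUpTo]
      have hadm0 : AdmissibleUpTo μ w f x0 z0 0
          (fun t _ => Classical.arbitrary (𝕌 t)) (fun _ _ => 0)
          (fun t => Nat.rec (motive := fun t => Ω → 𝕏 t) (fun _ => x0)
            (fun n _ _ => Classical.arbitrary (𝕏 (n+1))) t)
          (fun _ _ => z0) :=
        ⟨fun _ => rfl, fun t ht => absurd ht (by omega), fun t ht => absurd ht (by omega),
          fun t ht => absurd ht (by omega), fun _ => rfl, fun t ht => absurd ht (by omega)⟩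
      refine iInf_le_of_le _ (iInf_le_of_le _ (iInf_le_of_le _ (iInf_le_of_le _
        (iInf_le_of_le hadm0 ?_))))
      simp only [Finset.range_zero, Finset.sum_empty, zero_add]
      refine le_of_eq ?_
      show (∫⁻ _ : Ω, 𝒱 0 x0 z0 ∂μ) = 𝒱 0 x0 z0
      rw [lintegral_const, measure_univ, mul_one]
    · rw [valueUpTo]
      refine le_iInf fun U => le_iInf fun V => le_iInf fun X => le_iInf fun Z =>
        le_iInf fun hadm => ?_
      obtain ⟨hX0, _, _, _, hZ0, _⟩ := hadm
      have h : ∀ ω : Ω, (∑ t ∈ Finset.range 0, L t (X t ω) (U t ω) (w (t + 1) ω))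
          + 𝒱 0 (X 0 ω) (Z 0 ω) = 𝒱 0 x0 z0 := by
        intro ω
        rw [hX0 ω, hZ0 ω]
        simp
      rw [lintegral_congr h, lintegral_const, measure_univ, mul_one]
  have hall : ∀ n, n ≤ T → valueUpTo μ w f L 𝒱 x0 z0 n = 𝒱 0 x0 z0 := by
    intro n
    induction n with
    | zero => exact fun _ => hW0
    | succ n ih => exact fun h => by rw [hstep n h]; exact ih (by omega)
  exact hall T le_rfl
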